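/- Let P be a tree on {1,…,n} with leaves l_1,…,l_k, and let I_L(P) be its leaf ideal. Then: (a) the k monomials ∏_{j ≤_P l} x_j (l a leaf of P) form the minimal monomial generating set of I_L(P); (b) for every i ∈ {1,…,n}, C_i(I_L(P)) = ⋂_{l leaf of P with i ≤_P l} { j : j ≤_P l }; and (c) if every non-maximal element of P has at least two children, then C_i(I_L(P)) = { j : j ≤_P i } for every i, so the map i ↦ C_i(I_L(P)) is an isomorphism from P onto the support poset of I_L(P). -/

import Mathlib

open MvPolynomial

/-- The squarefree monomial with support `s`: `∏_{j ∈ s} x_j`. -/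
noncomputable def sfMon (𝕜 : Type) [Field 𝕜] {σ : Type} (s : Finset σ) : MvPolynomial σ 𝕜 :=
  ∏ j ∈ s, X j

/-- The supports of the minimal monomial generating set `G(I)` of a squarefree monomial
ideal `I`: supports `s` of squarefree monomials in `I` no proper (squarefree) divisor of which
lies in `I`. -/
def sqfreeMinGens {𝕜 : Type} [Field 𝕜] {σ : Type} (I : Ideal (MvPolynomial σ 𝕜)) :
    Set (Finset σ) :=
  { s | sfMon 𝕜 s ∈ I ∧ ∀ t : Finset σ, t ⊂ s → sfMon 𝕜 t ∉ I }

/-- `C_i(I) = ⋂ { supp m : m ∈ G(I), x_i ∣ m }`. -/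
def suppC {𝕜 : Type} [Field 𝕜] {σ : Type} (I : Ideal (MvPolynomial σ 𝕜)) (i : σ) : Set σ :=
  ⋂ s ∈ { s | s ∈ sqfreeMinGens I ∧ i ∈ s }, (s : Set σ)


open Classical

/-- A partial order `P` on `α` is a forest if, for every `p`, the set of elements strictly
below `p` is a chain. -/
def IsPForest {α : Type} (P : PartialOrder α) : Prop :=
  ∀ p q r : α, P.lt q p → P.lt r p → P.le q r ∨ P.le r q

/-- `l` is maximal (a leaf) for the partial order `P`. -/
def PIsMax {α : Type} (P : PartialOrder α) (l : α) : Prop := ∀ q, P.le l q → q = l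

/-- `r` is minimal (a root) for the partial order `P`. -/
def PIsMin {α : Type} (P : PartialOrder α) (r : α) : Prop := ∀ q, P.le q r → q = r

/-- `q` is a child of `p`: `q` covers `p` in `P`. -/
def PChild {α : Type} (P : PartialOrder α) (p q : α) : Prop :=
  P.lt p q ∧ ∀ r, P.lt p r → ¬ P.lt r q

/-- The leaf ideal of a forest `P` on `{1,…,n}`:
`I_L(P) = ⟨ ∏_{j ≤_P l} x_j : l a leaf of P ⟩`. -/
noncomputable def leafIdeal (𝕜 : Type) [Field 𝕜] {n : ℕ} (P : PartialOrder (Fin n)) :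
    Ideal (MvPolynomial (Fin n) 𝕜) :=
  Ideal.span { f | ∃ l : Fin n, PIsMax P l ∧
    f = sfMon 𝕜 (Finset.univ.filter (fun j => P.le j l)) }

/-- The exponent finsupp of the squarefree monomial with support `t`. -/
noncomputable def ddAux {σ : Type} (t : Finset σ) : σ →₀ ℕ := ∑ j ∈ t, Finsupp.single j 1

lemma ddAux_apply {σ : Type} (t : Finset σ) (j : σ) : ddAux t j = if j ∈ t then 1 else 0 := by
  classical
  simp [ddAux, Finsupp.finset_sum_apply, Finsupp.single_apply]

lemma ddAux_insert {σ : Type} {a : σ} {t : Finset σ} (h : a ∉ t) :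
    ddAux (insert a t) = Finsupp.single a 1 + ddAux t := by
  rw [ddAux, Finset.sum_insert h]; rfl

lemma sfMon_eq_monomial {𝕜 : Type} [Field 𝕜] {σ : Type} (t : Finset σ) :
    sfMon 𝕜 t = monomial (ddAux t) 1 := by
  classical
  induction t using Finset.induction with
  | empty => simp [sfMon, ddAux]
  | insert _ _ h ih =>
      rw [sfMon, Finset.prod_insert h, ← sfMon, ih, ddAux_insert h, X, monomial_mul, one_mul]

lemma ddAux_le_iff {σ : Type} {s t : Finset σ} : ddAux s ≤ ddAux t ↔ s ⊆ t := by
  classical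
  rw [Finsupp.le_def]
  constructor
  · intro h j hj
    have := h j
    rw [ddAux_apply, ddAux_apply, if_pos hj] at this
    by_contra hjt
    rw [if_neg hjt] at this; omega
  · intro h j
    rw [ddAux_apply, ddAux_apply]
    by_cases hj : j ∈ s
    · rw [if_pos hj, if_pos (h hj)]
    · simp [hj]

lemma mem_leafIdeal_iff {𝕜 : Type} [Field 𝕜] {n : ℕ} (P : PartialOrder (Fin n))
    (t : Finset (Fin n)) :
    sfMon 𝕜 t ∈ leafIdeal 𝕜 P ↔
      ∃ l : Fin n, PIsMax P l ∧ (Finset.univ.filter (fun j => P.le j l)) ⊆ t := by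
  classical
  have hset : { f : MvPolynomial (Fin n) 𝕜 | ∃ l : Fin n, PIsMax P l ∧
      f = sfMon 𝕜 (Finset.univ.filter (fun j => P.le j l)) } =
      (fun d => monomial d (1 : 𝕜)) ''
        { d | ∃ l : Fin n, PIsMax P l ∧ d = ddAux (Finset.univ.filter (fun j => P.le j l)) } := by
    ext f
    constructor
    · rintro ⟨l, hl, rfl⟩
      exact ⟨ddAux _, ⟨l, hl, rfl⟩, (sfMon_eq_monomial _).symm⟩
    · rintro ⟨d, ⟨l, hl, rfl⟩, rfl⟩
      exact ⟨l, hl, (sfMon_eq_monomial _).symm⟩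
  rw [leafIdeal, hset, sfMon_eq_monomial, mem_ideal_span_monomial_image]
  rw [support_monomial, if_neg (one_ne_zero : (1:𝕜) ≠ 0)]
  simp only [Finset.mem_singleton, forall_eq, Set.mem_setOf_eq]
  constructor
  · rintro ⟨si, ⟨l, hl, rfl⟩, hle⟩
    exact ⟨l, hl, ddAux_le_iff.mp hle⟩
  · rintro ⟨l, hl, hsub⟩
    exact ⟨ddAux _, ⟨l, hl, rfl⟩, ddAux_le_iff.mpr hsub⟩

lemma exists_leaf_above {α : Type} [Fintype α] (P : PartialOrder α) (x : α) :
    ∃ l, PIsMax P l ∧ P.le x l := by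
  classical
  letI := P
  have key : ∀ k : ℕ, ∀ x : α, (Finset.univ.filter (fun y => P.lt x y)).card ≤ k →
      ∃ l, PIsMax P l ∧ P.le x l := by
    intro k
    induction k with
    | zero =>
        intro x hx
        refine ⟨x, ?_, P.le_refl x⟩
        intro q hq
        by_contra hne
        have hlt : P.lt x q := (P.lt_iff_le_not_ge x q).mpr
          ⟨hq, fun h => hne (P.le_antisymm _ _ h hq)⟩
        have : q ∈ Finset.univ.filter (fun y => P.lt x y) := by
          simp [hlt]
        simp [Finset.card_eq_zero.mp (Nat.le_zero.mp hx)] at this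
    | succ k ih =>
        intro x hx
        by_cases h : PIsMax P x
        · exact ⟨x, h, P.le_refl x⟩
        · simp only [PIsMax, not_forall] at h
          obtain ⟨q, hq, hne⟩ := h
          have hlt : P.lt x q := (P.lt_iff_le_not_ge x q).mpr
            ⟨hq, fun h' => hne (P.le_antisymm _ _ h' hq)⟩
          have hsub : Finset.univ.filter (fun y => P.lt q y) ⊂
              Finset.univ.filter (fun y => P.lt x y) := by
            constructor
            · intro y hy
              simp only [Finset.mem_filter, Finset.mem_univ, true_and] at hy ⊢
              exact lt_of_le_of_lt (le_of_lt hlt) hy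
            · intro hcon
              have : q ∈ Finset.univ.filter (fun y => P.lt q y) := by
                apply hcon; simp [hlt]
              simp only [Finset.mem_filter, Finset.mem_univ, true_and] at this
              exact lt_irrefl q this
          have hcard : (Finset.univ.filter (fun y => P.lt q y)).card ≤ k := by
            have := Finset.card_lt_card hsub
            omega
          obtain ⟨l, hl, hql⟩ := ih q hcard
          exact ⟨l, hl, le_trans hq hql⟩
  exact key _ x le_rfl

lemma children_incomp {α : Type} (P : PartialOrder α) (p q q' : α)
    (hq : PChild P p q) (hq' : PChild P p q') (hne : q ≠ q') : ¬ P.le q q' := by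
  letI := P
  intro h
  exact hq'.2 q hq.1 (lt_of_le_of_ne h hne)

lemma key_le {n : ℕ} (P : PartialOrder (Fin n)) (hforest : IsPForest P)
    (hb : ∀ p, ¬ PIsMax P p → ∃ q q' : Fin n, q ≠ q' ∧ PChild P p q ∧ PChild P p q')
    (i j : Fin n) (hj : ∀ l, PIsMax P l → P.le i l → P.le j l) : P.le j i := by
  letI := P
  by_cases hji : P.le j i
  · exact hji
  exfalso
  by_cases hmax : PIsMax P i
  · exact hji (hj i hmax (le_refl i))
  obtain ⟨q, q', hne, hq, hq'⟩ := hb i hmax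
  obtain ⟨l0, hl0, hil0⟩ := exists_leaf_above P i
  have hjl0 := hj l0 hl0 hil0
  have hil0' : P.lt i l0 := by
    refine lt_of_le_of_ne hil0 (fun h => hmax ?_)
    rw [h]; exact hl0
  have hij : P.lt i j := by
    rcases eq_or_lt_of_le hjl0 with h | hjl0'
    · rw [h]; exact hil0'
    · rcases hforest l0 i j hil0' hjl0' with h | h
      · refine lt_of_le_of_ne h (fun e => hji ?_)
        rw [e]
      · exact absurd h hji
  have hnotboth : ¬ (P.le q j ∧ P.le q' j) := by
    rintro ⟨h1, h2⟩
    rcases eq_or_lt_of_le h1 with e | h1'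
    · subst e; exact children_incomp P i q' q hq' hq hne.symm h2
    rcases eq_or_lt_of_le h2 with e | h2'
    · subst e; exact children_incomp P i q q' hq hq' hne h1
    rcases hforest j q q' h1' h2' with h | h
    · exact children_incomp P i q q' hq hq' hne h
    · exact children_incomp P i q' q hq' hq hne.symm h
  have hex : ∃ c, PChild P i c ∧ ¬ P.le c j := by
    by_cases h1 : P.le q j
    · exact ⟨q', hq', fun h2 => hnotboth ⟨h1, h2⟩⟩
    · exact ⟨q, hq, h1⟩
  obtain ⟨c, hc, hcj⟩ := hex
  obtain ⟨l', hl', hcl'⟩ := exists_leaf_above P c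
  have hil' : P.le i l' := le_trans (le_of_lt hc.1) hcl'
  have hjl' := hj l' hl' hil'
  have hjl'' : P.lt j l' := by
    refine lt_of_le_of_ne hjl' (fun e => hcj ?_)
    rw [e]; exact hcl'
  rcases eq_or_lt_of_le hcl' with e | hcl''
  · subst e; exact hc.2 j hij hjl''
  rcases hforest l' j c hjl'' hcl'' with h | h
  · refine hc.2 j hij (lt_of_le_of_ne h (fun e => hcj ?_))
    rw [e]
  · exact hcj h

theorem stmt9 {𝕜 : Type} [Field 𝕜] (n : ℕ) (P : PartialOrder (Fin n))
    (hforest : IsPForest P) (hroot : ∃! r : Fin n, PIsMin P r) :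
    (sqfreeMinGens (leafIdeal 𝕜 P) =
      { s | ∃ l : Fin n, PIsMax P l ∧ s = Finset.univ.filter (fun j => P.le j l) }) ∧
    (∀ i : Fin n, suppC (leafIdeal 𝕜 P) i =
      ⋂ l ∈ { l : Fin n | PIsMax P l ∧ P.le i l }, { j : Fin n | P.le j l }) ∧
    ((∀ p : Fin n, ¬ PIsMax P p → ∃ q q' : Fin n, q ≠ q' ∧ PChild P p q ∧ PChild P p q') →
      (∀ i : Fin n, suppC (leafIdeal 𝕜 P) i = { j : Fin n | P.le j i }) ∧
      (Function.Injective (fun i => suppC (leafIdeal 𝕜 P) i) ∧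
       ∀ i i' : Fin n, suppC (leafIdeal 𝕜 P) i ⊆ suppC (leafIdeal 𝕜 P) i' ↔ P.le i i')) := by
  classical
  have hmem := fun t => mem_leafIdeal_iff (𝕜 := 𝕜) P t
  have ha : sqfreeMinGens (leafIdeal 𝕜 P) =
      { s | ∃ l : Fin n, PIsMax P l ∧ s = Finset.univ.filter (fun j => P.le j l) } := by
    ext s
    simp only [sqfreeMinGens, Set.mem_setOf_eq]
    constructor
    · rintro ⟨hs, hmin⟩
      obtain ⟨l, hl, hsub⟩ := (hmem s).mp hs
      refine ⟨l, hl, ?_⟩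
      by_contra hne
      exact hmin _ (Finset.ssubset_iff_subset_ne.mpr ⟨hsub, fun e => hne e.symm⟩)
        ((hmem _).mpr ⟨l, hl, subset_rfl⟩)
    · rintro ⟨l, hl, rfl⟩
      refine ⟨(hmem _).mpr ⟨l, hl, subset_rfl⟩, ?_⟩
      intro t ht hmemt
      obtain ⟨l', hl', hsub'⟩ := (hmem t).mp hmemt
      have hl'mem : l' ∈ Finset.univ.filter (fun j => P.le j l') := by
        simp [P.le_refl]
      have hll' : P.le l' l := by
        have := ht.1 (hsub' hl'mem)
        simpa using this
      have : l = l' := hl' l hll'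
      subst this
      exact ht.2 hsub'
  have hbb : ∀ i : Fin n, suppC (leafIdeal 𝕜 P) i =
      ⋂ l ∈ { l : Fin n | PIsMax P l ∧ P.le i l }, { j : Fin n | P.le j l } := by
    intro i
    ext j
    simp only [suppC, Set.mem_iInter, Set.mem_setOf_eq, ha, Finset.mem_coe]
    constructor
    · rintro h l ⟨hl, hil⟩
      have := h (Finset.univ.filter (fun j => P.le j l)) ⟨⟨l, hl, rfl⟩, by simp [hil]⟩
      simpa using this
    · rintro h s ⟨⟨l, hl, rfl⟩, his⟩
      simp only [Finset.mem_filter, Finset.mem_univ, true_and] at his ⊢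
      exact h l ⟨hl, his⟩
  refine ⟨ha, hbb, ?_⟩
  intro hbr
  have hc : ∀ i : Fin n, suppC (leafIdeal 𝕜 P) i = { j : Fin n | P.le j i } := by
    intro i
    rw [hbb i]
    ext j
    simp only [Set.mem_iInter, Set.mem_setOf_eq]
    constructor
    · intro h
      exact key_le P hforest hbr i j (fun l hl hil => h l ⟨hl, hil⟩)
    · rintro h l ⟨hl, hil⟩
      exact P.le_trans _ _ _ h hil
  refine ⟨hc, ?_, ?_⟩
  · intro i i' h
    simp only [hc] at h
    have h1 : P.le i i' := (Set.ext_iff.mp h i).mp (P.le_refl i)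
    have h2 : P.le i' i := (Set.ext_iff.mp h i').mpr (P.le_refl i')
    exact P.le_antisymm _ _ h1 h2
  · intro i i'
    rw [hc, hc]
    constructor
    · intro h
      exact h (P.le_refl i)
    · intro h j hj
      exact P.le_trans _ _ _ hj h
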